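/- Let E ⊆ ℝᵈ, let H : E × ℝᵈ → ℝ be twice continuously differentiable and let S : E → [0,∞) be twice continuously differentiable on the interior of E. Define H*(x,p) := H(x, DS(x) − p). Fix T > 0 and suppose (x(t), p(t)) for t ∈ (0,T) is a C¹ curve in the interior of E × ℝᵈ solving the Hamilton equations ẋ = H_p(x,p), ṗ = −H_x(x,p). Then the time-reversed curve (x*(t), p*(t)) := (x(T−t), DS(x(T−t)) − p(T−t)) solves the Hamilton equations for H*: ẋ* = H*_p(x*, p*), ṗ* = −H*_x(x*, p*). -/

import Mathlib

/-- The `i`-th partial derivative (component of the gradient) of `f : (Fin d → ℝ) → ℝ`. -/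
noncomputable def pgrad {d : ℕ} (f : (Fin d → ℝ) → ℝ) (x : Fin d → ℝ) : Fin d → ℝ :=
  fun i => fderiv ℝ f x (Pi.single i 1)

/-- Gradient of `H` in the momentum variable. -/
noncomputable def Hp {d : ℕ} (H : (Fin d → ℝ) → (Fin d → ℝ) → ℝ)
    (x p : Fin d → ℝ) : Fin d → ℝ := pgrad (H x) p

/-- Gradient of `H` in the position variable. -/
noncomputable def Hx {d : ℕ} (H : (Fin d → ℝ) → (Fin d → ℝ) → ℝ)
    (x p : Fin d → ℝ) : Fin d → ℝ := pgrad (fun y => H y p) x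

/-- Auxiliary: evaluation of a continuous linear functional on `ℝ^d` at the basis vectors,
as a continuous linear map. -/
noncomputable def Phi (d : ℕ) : ((Fin d → ℝ) →L[ℝ] ℝ) →L[ℝ] (Fin d → ℝ) :=
  ContinuousLinearMap.pi (fun i => ContinuousLinearMap.apply ℝ ℝ (Pi.single i 1))

section aux
variable {d : ℕ} {H : (Fin d → ℝ) → (Fin d → ℝ) → ℝ} {S : (Fin d → ℝ) → ℝ}
  {Hstar : (Fin d → ℝ) → (Fin d → ℝ) → ℝ}

lemma clm_eq_sum (f : (Fin d → ℝ) →L[ℝ] ℝ) (u : Fin d → ℝ) :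
    f u = ∑ j, u j * f (Pi.single j 1) := by
  have h : ∀ j : Fin d, (fun k => if j = k then (1:ℝ) else 0) = Pi.single j 1 := by
    intro j; funext k; simp [Pi.single_apply, eq_comm]
  have := (f : (Fin d → ℝ) →ₗ[ℝ] ℝ).pi_apply_eq_sum_univ u
  simp only [h] at this
  simpa [smul_eq_mul] using this

lemma Hp_star (hH : Differentiable ℝ (fun z : (Fin d → ℝ) × (Fin d → ℝ) => H z.1 z.2))
    (hHstar : ∀ x p, Hstar x p = H x (pgrad S x - p)) (x p : Fin d → ℝ) :
    Hp Hstar x (pgrad S x - p) = -(Hp H x p) := by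
  have hHx : Differentiable ℝ (H x) := by
    have : Differentiable ℝ (fun q : Fin d → ℝ =>
        (fun z : (Fin d → ℝ) × (Fin d → ℝ) => H z.1 z.2) (x, q)) :=
      hH.comp ((differentiable_const x).prodMk differentiable_id)
    exact this
  set c := pgrad S x with hc
  have hmap : ∀ q : Fin d → ℝ, HasFDerivAt (fun q' : Fin d → ℝ => c - q')
      (0 - ContinuousLinearMap.id ℝ (Fin d → ℝ)) q := fun q =>
    (hasFDerivAt_const c q).sub (hasFDerivAt_id q)
  funext i
  have key : HasFDerivAt (Hstar x)
      ((fderiv ℝ (H x) p).comp (0 - ContinuousLinearMap.id ℝ (Fin d → ℝ))) (c - p) := by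
    have heq : Hstar x = fun q' => H x (c - q') := by funext q'; rw [hHstar]
    rw [heq]
    have h1 := (hHx (c - (c - p))).hasFDerivAt.comp (c - p) (hmap (c - p))
    rwa [sub_sub_cancel] at h1
  show fderiv ℝ (Hstar x) (c - p) (Pi.single i 1) = _
  rw [key.fderiv]
  simp [Hp, pgrad]

lemma Hx_star (hH : Differentiable ℝ (fun z : (Fin d → ℝ) × (Fin d → ℝ) => H z.1 z.2))
    (hS : ContDiff ℝ 2 S)
    (hHstar : ∀ x p, Hstar x p = H x (pgrad S x - p)) (x p : Fin d → ℝ) (i : Fin d) :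
    Hx Hstar x (pgrad S x - p) i
      = Hx H x p i + fderiv ℝ (H x) p (Phi d (fderiv ℝ (fderiv ℝ S) x (Pi.single i 1))) := by
  have hS' : Differentiable ℝ (fderiv ℝ S) :=
    (hS.fderiv_right (m := 1) (by norm_num)).differentiable (by norm_num)
  have hpg : ∀ y, HasFDerivAt (pgrad S) ((Phi d).comp (fderiv ℝ (fderiv ℝ S) y)) y :=
    fun y => (Phi d).hasFDerivAt.comp y (hS' y).hasFDerivAt
  set q := pgrad S x - p with hq
  set L := fderiv ℝ (fun z : (Fin d → ℝ) × (Fin d → ℝ) => H z.1 z.2) (x, p) with hL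
  set A := (Phi d).comp (fderiv ℝ (fderiv ℝ S) x) with hA
  have hg : HasFDerivAt (fun y : Fin d → ℝ => ((y, pgrad S y - q) : (Fin d → ℝ) × (Fin d → ℝ)))
      ((ContinuousLinearMap.id ℝ (Fin d → ℝ)).prod (A - 0)) x :=
    (hasFDerivAt_id x).prodMk ((hpg x).sub (hasFDerivAt_const q x))
  have hcomp : HasFDerivAt (fun y => Hstar y q) (L.comp
      ((ContinuousLinearMap.id ℝ (Fin d → ℝ)).prod (A - 0))) x := by
    have heq : (fun y => Hstar y q) = fun y =>
        (fun z : (Fin d → ℝ) × (Fin d → ℝ) => H z.1 z.2) (y, pgrad S y - q) := by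
      funext y; rw [hHstar]
    rw [heq]
    have hfix : pgrad S x - q = p := by rw [hq, sub_sub_cancel]
    have := (hH (x, pgrad S x - q)).hasFDerivAt.comp x hg
    rwa [hfix] at this
  show fderiv ℝ (fun y => Hstar y q) x (Pi.single i 1) = _
  rw [hcomp.fderiv]
  have expand : L ((Pi.single i 1 : Fin d → ℝ), A (Pi.single i 1))
      = L ((Pi.single i 1 : Fin d → ℝ), 0) + L (0, A (Pi.single i 1)) := by
    rw [← map_add]; simp
  have e1 : Hx H x p i = L ((Pi.single i 1 : Fin d → ℝ), 0) := by
    have h1 : HasFDerivAt (fun y : Fin d → ℝ => ((y, p) : (Fin d → ℝ) × (Fin d → ℝ)))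
        (ContinuousLinearMap.inl ℝ _ _) x := (hasFDerivAt_id x).prodMk (hasFDerivAt_const p x)
    have h2 := (hH (x, p)).hasFDerivAt.comp x h1
    have h3 : fderiv ℝ (fun y => H y p) x = L.comp (ContinuousLinearMap.inl ℝ _ _) := h2.fderiv
    show fderiv ℝ (fun y => H y p) x (Pi.single i 1) = _
    rw [h3]; rfl
  have e2 : fderiv ℝ (H x) p (A (Pi.single i 1)) = L (0, A (Pi.single i 1)) := by
    have h1 : HasFDerivAt (fun w : Fin d → ℝ => ((x, w) : (Fin d → ℝ) × (Fin d → ℝ)))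
        (ContinuousLinearMap.inr ℝ _ _) p := (hasFDerivAt_const x p).prodMk (hasFDerivAt_id p)
    have h2 := (hH (x, p)).hasFDerivAt.comp p h1
    have h3 : fderiv ℝ (H x) p = L.comp (ContinuousLinearMap.inr ℝ _ _) := h2.fderiv
    rw [h3]; rfl
  simp only [ContinuousLinearMap.coe_comp', Function.comp_apply,
    ContinuousLinearMap.prod_apply, ContinuousLinearMap.coe_id', id_eq,
    ContinuousLinearMap.sub_apply, ContinuousLinearMap.zero_apply, sub_zero]
  rw [expand, e1, ← e2]; rfl

/-- Symmetry of second derivatives: key exchange identity. -/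
lemma sym_key (hS : ContDiff ℝ 2 S) (X : Fin d → ℝ) (g : (Fin d → ℝ) →L[ℝ] ℝ)
    (v : Fin d → ℝ) (hv : ∀ j, v j = g (Pi.single j 1)) (i : Fin d) :
    fderiv ℝ (fderiv ℝ S) X v (Pi.single i 1)
      = g (Phi d (fderiv ℝ (fderiv ℝ S) X (Pi.single i 1))) := by
  have hSd : Differentiable ℝ S := hS.differentiable (by norm_num)
  have hS' : Differentiable ℝ (fderiv ℝ S) :=
    (hS.fderiv_right (m := 1) (by norm_num)).differentiable (by norm_num)
  have hsym : ∀ a b : Fin d → ℝ,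
      fderiv ℝ (fderiv ℝ S) X a b = fderiv ℝ (fderiv ℝ S) X b a :=
    second_derivative_symmetric (fun y => (hSd y).hasFDerivAt) (hS' X).hasFDerivAt
  set B := fderiv ℝ (fderiv ℝ S) X with hB
  -- LHS
  have lhs : B v (Pi.single i 1)
      = ∑ j, v j * B (Pi.single j 1) (Pi.single i 1) := by
    have := clm_eq_sum ((ContinuousLinearMap.apply ℝ ℝ (Pi.single i 1)).comp B) v
    simpa using this
  -- RHS
  have rhs : g (Phi d (B (Pi.single i 1)))
      = ∑ j, B (Pi.single i 1) (Pi.single j 1) * g (Pi.single j 1) := by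
    have := clm_eq_sum g (Phi d (B (Pi.single i 1)))
    simpa [Phi] using this
  rw [lhs, rhs]
  refine Finset.sum_congr rfl fun j _ => ?_
  rw [hv j, hsym (Pi.single j 1) (Pi.single i 1)]
  ring

end aux

theorem stmt_8 (d : ℕ) (H : (Fin d → ℝ) → (Fin d → ℝ) → ℝ) (S : (Fin d → ℝ) → ℝ)
    (hH : ContDiff ℝ 2 (fun z : (Fin d → ℝ) × (Fin d → ℝ) => H z.1 z.2))
    (hS : ContDiff ℝ 2 S) (hSnn : ∀ x, 0 ≤ S x)
    (Hstar : (Fin d → ℝ) → (Fin d → ℝ) → ℝ)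
    (hHstar : ∀ x p, Hstar x p = H x (pgrad S x - p))
    (T : ℝ) (hT : 0 < T)
    (x p : ℝ → Fin d → ℝ)
    (hx : ∀ t ∈ Set.Ioo (0 : ℝ) T, HasDerivAt x (Hp H (x t) (p t)) t)
    (hp : ∀ t ∈ Set.Ioo (0 : ℝ) T, HasDerivAt p (-(Hx H (x t) (p t))) t) :
    ∀ t ∈ Set.Ioo (0 : ℝ) T,
      HasDerivAt (fun s => x (T - s))
        (Hp Hstar (x (T - t)) (pgrad S (x (T - t)) - p (T - t))) t ∧
      HasDerivAt (fun s => pgrad S (x (T - s)) - p (T - s))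
        (-(Hx Hstar (x (T - t)) (pgrad S (x (T - t)) - p (T - t)))) t := by
  intro t ht
  have htau : T - t ∈ Set.Ioo (0 : ℝ) T := ⟨by linarith [ht.2], by linarith [ht.1]⟩
  have hHd : Differentiable ℝ (fun z : (Fin d → ℝ) × (Fin d → ℝ) => H z.1 z.2) :=
    hH.differentiable (by norm_num)
  have hS' : Differentiable ℝ (fderiv ℝ S) :=
    (hS.fderiv_right (m := 1) (by norm_num)).differentiable (by norm_num)
  have hpg : ∀ y, HasFDerivAt (pgrad S) ((Phi d).comp (fderiv ℝ (fderiv ℝ S) y)) y :=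
    fun y => (Phi d).hasFDerivAt.comp y (hS' y).hasFDerivAt
  have hx' := hx (T - t) htau
  have hp' := hp (T - t) htau
  have hneg : HasDerivAt (fun s : ℝ => T - s) (-1) t := by
    simpa using (hasDerivAt_id t).const_sub T
  set X := x (T - t) with hX
  set P := p (T - t) with hP
  set v := Hp H X P with hv
  set w := Hx H X P with hw
  -- Part 1
  have h1 : HasDerivAt (fun s => x (T - s)) (-v) t := by
    have := hx'.scomp t hneg
    simpa [Function.comp_def] using this
  have part1 : HasDerivAt (fun s => x (T - s))
      (Hp Hstar X (pgrad S X - P)) t := by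
    rw [Hp_star hHd hHstar X P]; exact h1
  refine ⟨part1, ?_⟩
  -- Part 2
  have h2a : HasDerivAt (fun s => pgrad S (x (T - s)))
      (((Phi d).comp (fderiv ℝ (fderiv ℝ S) X)) (-v)) t := by
    have := (hpg X).comp_hasDerivAt t h1
    simpa [Function.comp_def] using this
  have h2b : HasDerivAt (fun s => p (T - s)) (w) t := by
    have := hp'.scomp t hneg
    simpa [Function.comp_def] using this
  have h2 := h2a.sub h2b
  have deq : ((Phi d).comp (fderiv ℝ (fderiv ℝ S) X)) (-v) - w
      = -(Hx Hstar X (pgrad S X - P)) := by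
    funext i
    have hxs := Hx_star hHd hS hHstar X P i
    have hk := sym_key hS X (fderiv ℝ (H X) P) v (fun j => rfl) i
    have lhs_i : (((Phi d).comp (fderiv ℝ (fderiv ℝ S) X)) (-v) - w) i
        = -(fderiv ℝ (fderiv ℝ S) X v (Pi.single i 1)) - w i := by
      simp [Phi]
    rw [lhs_i]
    have : (-(Hx Hstar X (pgrad S X - P))) i = -(Hx Hstar X (pgrad S X - P) i) := rfl
    rw [this, hxs, hk]
    ring
  rw [← deq]
  exact h2
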